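/- Let P be a finite patchwork on a set Ω and let A ∈ P be nonempty. Then A is the union of the maximal autonomous members of P contained in A, and these maximal autonomous members are pairwise disjoint. -/

import Mathlib

/-- A subset `A` is convex with respect to an order relation `le` if whenever
`p ≤ q ≤ r` with `p ∈ A` and `r ∈ A`, also `q ∈ A`. -/
def IsConvex {Ω : Type*} (le : Ω → Ω → Prop) (A : Set Ω) : Prop :=
  ∀ p q r : Ω, le p q → le q r → p ∈ A → r ∈ A → q ∈ A

/-- Two subsets overlap if they have nonempty intersection and neither contains the other. -/
def Overlap {Ω : Type*} (A B : Set Ω) : Prop :=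
  (A ∩ B).Nonempty ∧ ¬ A ⊆ B ∧ ¬ B ⊆ A

/-- A patchwork on `Ω` is a set of subsets of `Ω` containing `∅` and `Ω` and closed under
intersection, union and difference of overlapping pairs. -/
def IsPatchwork {Ω : Type*} (P : Set (Set Ω)) : Prop :=
  ∅ ∈ P ∧ Set.univ ∈ P ∧
    ∀ A ∈ P, ∀ B ∈ P, Overlap A B → A ∩ B ∈ P ∧ A ∪ B ∈ P ∧ A \ B ∈ P

/-- A member of a patchwork is autonomous if it is nonempty and overlaps no member. -/
def Autonomous {Ω : Type*} (P : Set (Set Ω)) (A : Set Ω) : Prop :=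
  A ∈ P ∧ A.Nonempty ∧ ∀ B ∈ P, ¬ Overlap A B

/-- The cohort under `B`: the maximal autonomous proper subsets of `B`. -/
def Cohort {Ω : Type*} (P : Set (Set Ω)) (B : Set Ω) : Set (Set Ω) :=
  {A | Autonomous P A ∧ A ⊂ B ∧ ∀ C, Autonomous P C → C ⊂ B → A ⊆ C → A = C}

/-- Two members of a patchwork are adjacent if they are disjoint and their union is a member. -/
def Adjacent {Ω : Type*} (P : Set (Set Ω)) (A B : Set Ω) : Prop :=
  Disjoint A B ∧ A ∪ B ∈ P

/-- The smallest patchwork on `Ω` containing `C`. -/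
def patchworkClosure {Ω : Type*} (C : Set (Set Ω)) : Set (Set Ω) :=
  ⋂₀ {P | IsPatchwork P ∧ C ⊆ P}

/-- The maximal autonomous members of `P` contained in `A`. -/
def MaxAutSub {Ω : Type*} (P : Set (Set Ω)) (A : Set Ω) : Set (Set Ω) :=
  {C | Autonomous P C ∧ C ⊆ A ∧ ∀ D : Set Ω, Autonomous P D → D ⊆ A → C ⊆ D → C = D}


theorem statement5 {Ω : Type*} (P : Set (Set Ω)) (hP : IsPatchwork P) (hfin : P.Finite)
    (A : Set Ω) (hA : A ∈ P) (hne : A.Nonempty) :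
    A = ⋃₀ MaxAutSub P A ∧
      ∀ C ∈ MaxAutSub P A, ∀ D ∈ MaxAutSub P A, C ≠ D → Disjoint C D := by
  obtain ⟨hempty, huniv, hclose⟩ := hP
  constructor
  · apply Set.Subset.antisymm
    · intro x hx
      set S : Set (Set Ω) := {B | B ∈ P ∧ x ∈ B ∧ B ⊆ A} with hS
      have hSfin : S.Finite := hfin.subset (fun B hB => hB.1)
      have hSne : S.Nonempty := ⟨A, hA, hx, subset_rfl⟩
      obtain ⟨M, hMS, hMmin⟩ := hSfin.exists_minimalFor id S hSne
      have hMaut : Autonomous P M := by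
        refine ⟨hMS.1, ⟨x, hMS.2.1⟩, ?_⟩
        intro B hB hov
        obtain ⟨hcap, hcup, hdiff⟩ := hclose M hMS.1 B hB hov
        obtain ⟨hnon, hns1, hns2⟩ := hov
        by_cases hxB : x ∈ B
        · have hmem : (M ∩ B) ∈ S :=
            ⟨hcap, ⟨hMS.2.1, hxB⟩, Set.inter_subset_left.trans hMS.2.2⟩
          have heq : M = M ∩ B :=
            Set.Subset.antisymm (hMmin hmem Set.inter_subset_left) Set.inter_subset_left
          exact hns1 (by rw [show M = M ∩ B from heq]; exact Set.inter_subset_right)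
        · have hmem : (M \ B) ∈ S :=
            ⟨hdiff, ⟨hMS.2.1, hxB⟩, Set.diff_subset.trans hMS.2.2⟩
          have heq : M = M \ B :=
            Set.Subset.antisymm (hMmin hmem Set.diff_subset) Set.diff_subset
          obtain ⟨y, hyM, hyB⟩ := hnon
          have : y ∈ M \ B := heq ▸ hyM
          exact this.2 hyB
      set T : Set (Set Ω) := {D | Autonomous P D ∧ D ⊆ A ∧ M ⊆ D} with hT
      have hTfin : T.Finite := hfin.subset (fun D hD => hD.1.1)
      have hTne : T.Nonempty := ⟨M, hMaut, hMS.2.2, subset_rfl⟩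
      obtain ⟨C, hCT, hCmax⟩ := hTfin.exists_maximalFor id T hTne
      refine ⟨C, ⟨hCT.1, hCT.2.1, ?_⟩, hCT.2.2 hMS.2.1⟩
      intro D hD hDA hCD
      exact Set.Subset.antisymm hCD (hCmax ⟨hD, hDA, hCT.2.2.trans hCD⟩ hCD)
    · exact Set.sUnion_subset (fun C hC => hC.2.1)
  · intro C hC D hD hne'
    rw [Set.disjoint_iff_inter_eq_empty]
    by_contra hcd
    have hnon : (C ∩ D).Nonempty := Set.nonempty_iff_ne_empty.mpr hcd
    have hno : ¬ Overlap C D := hC.1.2.2 D hD.1.1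
    have : C ⊆ D ∨ D ⊆ C := by
      by_contra h
      push_neg at h
      exact hno ⟨hnon, h.1, h.2⟩
    rcases this with h | h
    · exact hne' (hC.2.2 D hD.1 hD.2.1 h)
    · exact hne' ((hD.2.2 C hC.1 hC.2.1 h).symm)
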